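/- Let A be a k-algebra, flat as a k-module, and suppose there exists R = Σᵢ aᵢ⊗bᵢ ∈ A⊗(A⊗A) with each bᵢ ∈ (A⊗A)^A (i.e. c·bᵢ = bᵢ·c for the standard A-bimodule structure on A⊗A) such that R¹R²⊗R³ = 1⊗1. Then for every A-bimodule M, the map ε_M: A⊗M^A → M, a⊗m ↦ am, is bijective, with inverse ζ_M(m) = R¹ ⊗ R²mR³. -/
import Mathlib


open TensorProduct

section Separability

variable (k A M : Type*) [CommRing k] [Ring A] [Algebra k A]
  [AddCommGroup M] [Module k M] [Module A M] [Module Aᵐᵒᵖ M]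
  [IsScalarTower k A M] [IsScalarTower k Aᵐᵒᵖ M]
  [SMulCommClass A k M] [SMulCommClass Aᵐᵒᵖ k M] [SMulCommClass A Aᵐᵒᵖ M]

/-- The left action `A →ₗ[k] M →ₗ[k] M`, `a ↦ (m ↦ a • m)`. -/
noncomputable def lAct : A →ₗ[k] M →ₗ[k] M where
  toFun a := DistribMulAction.toLinearMap k M a
  map_add' a a' := by ext m; exact add_smul a a' m
  map_smul' c a := by ext m; exact smul_assoc c a m

/-- The right action `A →ₗ[k] M →ₗ[k] M`, `a ↦ (m ↦ m • a)`, via `Aᵐᵒᵖ`. -/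
noncomputable def rAct : A →ₗ[k] M →ₗ[k] M where
  toFun a := DistribMulAction.toLinearMap k M (MulOpposite.op a)
  map_add' a a' := by ext m; exact add_smul (MulOpposite.op a) (MulOpposite.op a') m
  map_smul' c a := by ext m; exact smul_assoc c (MulOpposite.op a) m

/-- The two-sided action of `A ⊗ A` on `M`: `(p ⊗ q) · m = p m q`. -/
noncomputable def act : A ⊗[k] A →ₗ[k] M →ₗ[k] M :=
  TensorProduct.lift
    (((LinearMap.llcomp k M M M).comp (lAct k A M)).compl₂ (rAct k A M))

/-- `M^A = {m ∈ M : am = ma for all a ∈ A}`, as a `k`-submodule of `M`. -/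
noncomputable def invariants : Submodule k M where
  carrier := {m | ∀ a : A, a • m = MulOpposite.op a • m}
  add_mem' := by
    intro m m' hm hm' a
    simp only [smul_add, hm a, hm' a]
  zero_mem' := by intro a; simp
  smul_mem' := by
    intro c m hm a
    rw [smul_comm a c m, hm a, smul_comm]

/-- The counit `ε_M : A ⊗ M^A → M`, `a ⊗ m ↦ am`. -/
noncomputable def epsInv : A ⊗[k] (invariants k A M) →ₗ[k] M :=
  (TensorProduct.lift (lAct k A M)).comp
    (TensorProduct.map LinearMap.id (invariants k A M).subtype)

section Aux

variable {k A M}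

lemma act_tmul' (x y : A) (m : M) :
    act k A M (x ⊗ₜ[k] y) m = x • (MulOpposite.op y • m) := rfl

/-- `ψ a (x ⊗ y) = x * a * y`. -/
noncomputable def psi (a : A) : A ⊗[k] A →ₗ[k] A :=
  (LinearMap.mul' k A) ∘ₗ (TensorProduct.map (LinearMap.mulRight k a) LinearMap.id)

lemma psi_tmul (a x y : A) : psi a (x ⊗ₜ[k] y) = x * a * y := by
  simp [psi]

lemma epsInv_tmul (a : A) (n : invariants k A M) :
    epsInv k A M (a ⊗ₜ[k] n) = a • (n : M) := rfl

end Aux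

/-- Let `A` be a flat `k`-algebra and suppose there exists
`R = ∑ᵢ aᵢ ⊗ bᵢ ∈ A ⊗ (A ⊗ A)` with each `bᵢ ∈ (A ⊗ A)^A` (for the standard
`A`-bimodule structure `a(x⊗y)a' = ax ⊗ ya'` on `A ⊗ A`) such that `R¹R² ⊗ R³ = 1 ⊗ 1`.
Then for an `A`-bimodule `M` the map `ε_M : A ⊗ M^A → M`, `a ⊗ m ↦ am`, is bijective,
with inverse `ζ_M(m) = R¹ ⊗ R²mR³` (composing with the inclusion `A ⊗ M^A ⊆ A ⊗ M`). -/
theorem counit_bijective_of_separability_element [Module.Flat k A]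
    (ι : Type*) (s : Finset ι) (aI : ι → A) (bI : ι → A ⊗[k] A)
    (hb : ∀ i ∈ s, ∀ c : A,
      TensorProduct.map (LinearMap.mulLeft k c) LinearMap.id (bI i)
        = TensorProduct.map LinearMap.id (LinearMap.mulRight k c) (bI i))
    (hnorm : ∑ i ∈ s,
        TensorProduct.map (LinearMap.mulLeft k (aI i)) LinearMap.id (bI i)
      = (1 : A) ⊗ₜ[k] (1 : A)) :
    Function.Bijective (epsInv k A M) ∧
    (∀ m : M,
      TensorProduct.lift (lAct k A M)
        (∑ i ∈ s, aI i ⊗ₜ[k] act k A M (bI i) m) = m) ∧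
    (∀ X : A ⊗[k] (invariants k A M),
      ∑ i ∈ s, aI i ⊗ₜ[k] act k A M (bI i) (epsInv k A M X)
        = TensorProduct.map LinearMap.id (invariants k A M).subtype X) := by
  classical
  have mapL : ∀ (c : A) (β : A ⊗[k] A),
      TensorProduct.map (LinearMap.mulLeft k c) LinearMap.id β = (c ⊗ₜ[k] (1:A)) * β := by
    intro c β
    induction β using TensorProduct.induction_on with
    | zero => simp
    | tmul x y => simp [Algebra.TensorProduct.tmul_mul_tmul]
    | add p q hp hq => simp only [map_add, hp, hq, mul_add]
  have mapR : ∀ (c : A) (β : A ⊗[k] A),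
      TensorProduct.map LinearMap.id (LinearMap.mulRight k c) β = β * ((1:A) ⊗ₜ[k] c) := by
    intro c β
    induction β using TensorProduct.induction_on with
    | zero => simp
    | tmul x y => simp [Algebra.TensorProduct.tmul_mul_tmul]
    | add p q hp hq => simp only [map_add, hp, hq, add_mul]
  have hb' : ∀ i ∈ s, ∀ c : A, (c ⊗ₜ[k] (1:A)) * bI i = bI i * ((1:A) ⊗ₜ[k] c) := by
    intro i hi c
    rw [← mapL, ← mapR]
    exact hb i hi c
  have hnorm' : ∑ i ∈ s, (aI i ⊗ₜ[k] (1:A)) * bI i = 1 := by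
    rw [Algebra.TensorProduct.one_def, ← hnorm]
    exact Finset.sum_congr rfl fun i _ => (mapL _ _).symm
  have psiL : ∀ (a c : A) (β : A ⊗[k] A), psi a ((c ⊗ₜ[k] (1:A)) * β) = c * psi a β := by
    intro a c β
    induction β using TensorProduct.induction_on with
    | zero => simp
    | tmul x y => simp [Algebra.TensorProduct.tmul_mul_tmul, psi_tmul, mul_assoc]
    | add p q hp hq => simp only [mul_add, map_add, hp, hq]
  have psiR : ∀ (a c : A) (β : A ⊗[k] A), psi a (β * ((1:A) ⊗ₜ[k] c)) = psi a β * c := by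
    intro a c β
    induction β using TensorProduct.induction_on with
    | zero => simp
    | tmul x y => simp [Algebra.TensorProduct.tmul_mul_tmul, psi_tmul, mul_assoc]
    | add p q hp hq => simp only [add_mul, map_add, hp, hq]
  have Zc : ∀ (a : A), ∀ i ∈ s, ∀ c : A, c * psi a (bI i) = psi a (bI i) * c := by
    intro a i hi c
    rw [← psiL, hb' i hi, psiR]
  have W : ∀ a : A, ∑ i ∈ s, aI i * psi a (bI i) = a := by
    intro a
    have h := congrArg (psi a) hnorm'
    rw [map_sum] at h
    calc ∑ i ∈ s, aI i * psi a (bI i)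
        = ∑ i ∈ s, psi a ((aI i ⊗ₜ[k] (1:A)) * bI i) :=
          Finset.sum_congr rfl fun i _ => (psiL _ _ _).symm
      _ = psi a 1 := h
      _ = a := by rw [Algebra.TensorProduct.one_def, psi_tmul]; simp
  set τ : A ⊗[k] A ≃ₐ[k] A ⊗[k] A := Algebra.TensorProduct.comm k A A with hτ
  have h1 : ∑ i ∈ s, bI i * ((1:A) ⊗ₜ[k] aI i) = 1 := by
    rw [← hnorm']
    exact Finset.sum_congr rfl fun i hi => (hb' i hi (aI i)).symm
  have h2 : ∑ i ∈ s, (τ (bI i)) * (aI i ⊗ₜ[k] (1:A)) = 1 := by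
    have h := congrArg τ h1
    simpa [map_sum, map_mul, hτ, Algebra.TensorProduct.comm_tmul] using h
  have h3 : ∑ i ∈ s, ((1:A) ⊗ₜ[k] aI i) * (τ (bI i)) = 1 := by
    have h := congrArg τ hnorm'
    simpa [map_sum, map_mul, hτ, Algebra.TensorProduct.comm_tmul] using h
  have hE : ∀ i ∈ s, ∀ c : A,
      ((1:A) ⊗ₜ[k] c) * τ (bI i) = τ (bI i) * (c ⊗ₜ[k] (1:A)) := by
    intro i hi c
    have h := congrArg τ (hb' i hi c)
    simpa [map_mul, hτ, Algebra.TensorProduct.comm_tmul] using h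
  have cent : ∀ (a : A), ∀ i ∈ s, ∀ β : A ⊗[k] A,
      ((psi a (bI i)) ⊗ₜ[k] (1:A)) * β = β * ((psi a (bI i)) ⊗ₜ[k] (1:A)) := by
    intro a i hi β
    induction β using TensorProduct.induction_on with
    | zero => simp
    | tmul x y => simp [Algebra.TensorProduct.tmul_mul_tmul, Zc a i hi x]
    | add p q hp hq => simp only [mul_add, add_mul, hp, hq]
  -- the key tensor identity `∑ᵢ aᵢ ⊗ (R²aR³)ᵢ = a ⊗ 1`
  have star : ∀ a : A, ∑ i ∈ s, aI i ⊗ₜ[k] psi a (bI i) = a ⊗ₜ[k] (1:A) := by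
    intro a
    symm
    have key : ∀ i ∈ s, ∀ j ∈ s,
        (aI i ⊗ₜ[k] (1:A)) * ((psi a (bI i)) ⊗ₜ[k] (1:A)) * (τ (bI j) * (aI j ⊗ₜ[k] (1:A)))
          = (aI i ⊗ₜ[k] psi a (bI i)) * (((1:A) ⊗ₜ[k] aI j) * τ (bI j)) := by
      intro i hi j hj
      calc (aI i ⊗ₜ[k] (1:A)) * ((psi a (bI i)) ⊗ₜ[k] (1:A)) * (τ (bI j) * (aI j ⊗ₜ[k] (1:A)))
          = (aI i ⊗ₜ[k] (1:A)) * ((((psi a (bI i)) ⊗ₜ[k] (1:A)) * τ (bI j)) * (aI j ⊗ₜ[k] (1:A))) := by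
            rw [mul_assoc, mul_assoc]
        _ = (aI i ⊗ₜ[k] (1:A)) * ((τ (bI j) * ((psi a (bI i)) ⊗ₜ[k] (1:A))) * (aI j ⊗ₜ[k] (1:A))) := by
            rw [cent a i hi]
        _ = (aI i ⊗ₜ[k] (1:A)) * (τ (bI j) * ((psi a (bI i) * aI j) ⊗ₜ[k] (1:A))) := by
            rw [mul_assoc, Algebra.TensorProduct.tmul_mul_tmul, one_mul]
        _ = (aI i ⊗ₜ[k] (1:A)) * (((1:A) ⊗ₜ[k] (psi a (bI i) * aI j)) * τ (bI j)) := by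
            rw [hE j hj]
        _ = (aI i ⊗ₜ[k] psi a (bI i)) * (((1:A) ⊗ₜ[k] aI j) * τ (bI j)) := by
            simp only [← mul_assoc, Algebra.TensorProduct.tmul_mul_tmul, one_mul, mul_one]
    calc a ⊗ₜ[k] (1:A)
        = (∑ i ∈ s, aI i * psi a (bI i)) ⊗ₜ[k] (1:A) := by rw [W a]
      _ = ∑ i ∈ s, (aI i ⊗ₜ[k] (1:A)) * ((psi a (bI i)) ⊗ₜ[k] (1:A)) * 1 := by
          rw [sum_tmul]
          exact Finset.sum_congr rfl fun i _ => by
            simp [Algebra.TensorProduct.tmul_mul_tmul]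
      _ = ∑ i ∈ s, ∑ j ∈ s, (aI i ⊗ₜ[k] (1:A)) * ((psi a (bI i)) ⊗ₜ[k] (1:A))
            * (τ (bI j) * (aI j ⊗ₜ[k] (1:A))) := by
          rw [← h2]
          exact Finset.sum_congr rfl fun i _ => by rw [Finset.mul_sum]
      _ = ∑ i ∈ s, ∑ j ∈ s, (aI i ⊗ₜ[k] psi a (bI i)) * (((1:A) ⊗ₜ[k] aI j) * τ (bI j)) :=
          Finset.sum_congr rfl fun i hi => Finset.sum_congr rfl fun j hj => key i hi j hj
      _ = ∑ i ∈ s, aI i ⊗ₜ[k] psi a (bI i) := by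
          refine Finset.sum_congr rfl fun i _ => ?_
          rw [← Finset.mul_sum, h3, mul_one]
  -- action lemmas
  have actL : ∀ (c : A) (β : A ⊗[k] A) (m : M),
      act k A M ((c ⊗ₜ[k] (1:A)) * β) m = c • act k A M β m := by
    intro c β m
    induction β using TensorProduct.induction_on with
    | zero => simp
    | tmul x y =>
      simp only [Algebra.TensorProduct.tmul_mul_tmul, one_mul, act_tmul', mul_smul]
    | add p q hp hq =>
      simp only [mul_add, map_add, LinearMap.add_apply, hp, hq, smul_add]
  have actR : ∀ (c : A) (β : A ⊗[k] A) (m : M),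
      act k A M (β * ((1:A) ⊗ₜ[k] c)) m = MulOpposite.op c • act k A M β m := by
    intro c β m
    induction β using TensorProduct.induction_on with
    | zero => simp
    | tmul x y =>
      simp only [Algebra.TensorProduct.tmul_mul_tmul, mul_one, act_tmul', MulOpposite.op_mul,
        mul_smul]
      exact smul_comm _ _ _
    | add p q hp hq =>
      simp only [add_mul, map_add, LinearMap.add_apply, hp, hq, smul_add]
  have mem_inv : ∀ (m : M), ∀ i ∈ s, act k A M (bI i) m ∈ invariants k A M := by
    intro m i hi c
    have h := congrArg (fun β => act k A M β m) (hb' i hi c)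
    simpa [actL, actR] using h
  have act_smul : ∀ (β : A ⊗[k] A) (a : A) (m : M),
      (∀ c : A, c • m = MulOpposite.op c • m) →
      act k A M β (a • m) = psi a β • m := by
    intro β a m hm
    induction β using TensorProduct.induction_on with
    | zero => simp
    | tmul x y =>
      rw [act_tmul', psi_tmul, ← smul_comm a (MulOpposite.op y) m, ← hm y,
        ← mul_smul, ← mul_smul, mul_assoc]
    | add p q hp hq =>
      simp only [map_add, LinearMap.add_apply, hp, hq, add_smul]
  have claim2 : ∀ m : M, TensorProduct.lift (lAct k A M)
      (∑ i ∈ s, aI i ⊗ₜ[k] act k A M (bI i) m) = m := by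
    intro m
    rw [map_sum]
    calc ∑ i ∈ s, TensorProduct.lift (lAct k A M) (aI i ⊗ₜ[k] act k A M (bI i) m)
        = ∑ i ∈ s, act k A M ((aI i ⊗ₜ[k] (1:A)) * bI i) m := by
          refine Finset.sum_congr rfl fun i _ => ?_
          rw [lift.tmul, actL]
          rfl
      _ = act k A M (∑ i ∈ s, (aI i ⊗ₜ[k] (1:A)) * bI i) m := by
          rw [map_sum, LinearMap.coe_sum, Finset.sum_apply]
      _ = m := by
          rw [hnorm', Algebra.TensorProduct.one_def, act_tmul']
          simp
  have claim3 : ∀ X : A ⊗[k] (invariants k A M),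
      ∑ i ∈ s, aI i ⊗ₜ[k] act k A M (bI i) (epsInv k A M X)
        = TensorProduct.map LinearMap.id (invariants k A M).subtype X := by
    intro X
    induction X using TensorProduct.induction_on with
    | zero => simp
    | tmul a n =>
      rw [epsInv_tmul]
      have hact : ∀ i ∈ s, act k A M (bI i) (a • (n : M)) = psi a (bI i) • (n : M) :=
        fun i _ => act_smul _ _ _ n.2
      calc ∑ i ∈ s, aI i ⊗ₜ[k] act k A M (bI i) (a • (n : M))
          = ∑ i ∈ s, aI i ⊗ₜ[k] (psi a (bI i) • (n : M)) :=
            Finset.sum_congr rfl fun i hi => by rw [hact i hi]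
        _ = TensorProduct.map LinearMap.id ((lAct k A M).flip (n : M))
              (∑ i ∈ s, aI i ⊗ₜ[k] psi a (bI i)) := by
            rw [map_sum]
            exact Finset.sum_congr rfl fun i _ => by rw [TensorProduct.map_tmul]; rfl
        _ = a ⊗ₜ[k] (n : M) := by
            rw [star a, TensorProduct.map_tmul]
            show a ⊗ₜ[k] ((1:A) • (n : M)) = _
            rw [one_smul]
        _ = TensorProduct.map LinearMap.id (invariants k A M).subtype (a ⊗ₜ[k] n) := by
            rw [TensorProduct.map_tmul]
            rfl
    | add X Y hX hY =>
      simp only [map_add, tmul_add, Finset.sum_add_distrib, hX, hY]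
  refine ⟨⟨?_, ?_⟩, claim2, claim3⟩
  · -- injective
    intro X Y hXY
    have h : TensorProduct.map LinearMap.id (invariants k A M).subtype X
        = TensorProduct.map LinearMap.id (invariants k A M).subtype Y := by
      rw [← claim3 X, ← claim3 Y, hXY]
    exact Module.Flat.lTensor_preserves_injective_linearMap (M := A)
      (invariants k A M).subtype (Submodule.injective_subtype _) h
  · -- surjective
    intro m
    refine ⟨∑ i ∈ s.attach, aI i ⊗ₜ[k] (⟨act k A M (bI i) m, mem_inv m i i.2⟩ : invariants k A M), ?_⟩
    rw [map_sum]
    calc ∑ i ∈ s.attach, epsInv k A M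
          (aI i ⊗ₜ[k] (⟨act k A M (bI i) m, mem_inv m i i.2⟩ : invariants k A M))
        = ∑ i ∈ s.attach, aI (i : ι) • act k A M (bI (i : ι)) m :=
          Finset.sum_congr rfl fun i _ => by rw [epsInv_tmul]
      _ = ∑ i ∈ s, aI i • act k A M (bI i) m := Finset.sum_attach s (fun i => aI i • act k A M (bI i) m)
      _ = TensorProduct.lift (lAct k A M) (∑ i ∈ s, aI i ⊗ₜ[k] act k A M (bI i) m) := by
          rw [map_sum]
          exact Finset.sum_congr rfl fun i _ => by rw [lift.tmul]; rfl
      _ = m := claim2 m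

end Separability
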